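/- The Wachter density integrates to at most 1, with equality when c ≤ 1: for 0 < y < 1 and 0 < c ≤ 1, ∫_{b₁}^{b} (1-y)√((b-x)(x-b₁)) / (2πx(c+xy)) dx = 1, where b₁ = ((1-√(c+y-cy))/(1-y))² and b = ((1+√(c+y-cy))/(1-y))². -/

import Mathlib

open Real
open MeasureTheory

lemma wachter_integrable_aux (r a : ℝ) (hr : 0 < r) (hra : r ≤ a) :
    IntervalIntegrable (fun t => Real.sqrt (r^2 - t^2) / (t + a)) volume (-r) r := by
  rcases eq_or_lt_of_le hra with rfl | hlt
  · -- singular endpoint case a = r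
    have hmeas : AEStronglyMeasurable (fun t => Real.sqrt (r^2 - t^2) / (t + r))
        (volume.restrict (Set.uIoc (-r) r)) :=
      (((measurable_const.sub (measurable_id.pow_const 2)).sqrt).div
        (measurable_id.add_const r)).aestronglyMeasurable
    have h0 : IntervalIntegrable (fun t : ℝ => t ^ (-(1/2) : ℝ)) volume 0 (2*r) :=
      intervalIntegral.intervalIntegrable_rpow' (by norm_num)
    have h1 := (h0.comp_add_right r).const_mul (Real.sqrt (2*r))
    have e1 : (0:ℝ) - r = -r := by ring
    have e2 : 2*r - r = r := by ring
    rw [e1, e2] at h1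
    refine h1.mono_fun' hmeas ?_
    rw [Set.uIoc_of_le (by linarith : -r ≤ r)]
    filter_upwards [ae_restrict_mem measurableSet_Ioc] with x hx
    obtain ⟨hx1, hx2⟩ := hx
    have hxr : (0:ℝ) < x + r := by linarith
    have hsq : Real.sqrt (x+r) ^ 2 = x + r := Real.sq_sqrt hxr.le
    have hsp : 0 < Real.sqrt (x+r) := Real.sqrt_pos.mpr hxr
    have h2 : (x+r) ^ (-(1/2):ℝ) = (Real.sqrt (x+r))⁻¹ := by
      rw [Real.rpow_neg hxr.le, Real.sqrt_eq_rpow]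
    simp only [Real.norm_eq_abs]
    rw [abs_of_nonneg (by positivity), h2,
      show r^2 - x^2 = (r-x)*(x+r) by ring,
      Real.sqrt_mul (by linarith : (0:ℝ) ≤ r - x)]
    calc Real.sqrt (r-x) * Real.sqrt (x+r) / (x+r)
        = Real.sqrt (r-x) / Real.sqrt (x+r) := by
          rw [← hsq]; field_simp; rw [Real.sqrt_sq hsp.le]
      _ ≤ Real.sqrt (2*r) * (Real.sqrt (x+r))⁻¹ := by
          rw [div_eq_mul_inv]
          exact mul_le_mul_of_nonneg_right (Real.sqrt_le_sqrt (by linarith)) (by positivity)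
  · apply ContinuousOn.intervalIntegrable
    apply ContinuousOn.div
    · exact ((continuous_const.sub (continuous_pow 2)).sqrt).continuousOn
    · exact (continuous_id.add continuous_const).continuousOn
    · intro x hx
      rw [Set.uIcc_of_le (by linarith : -r ≤ r)] at hx
      have := hx.1
      intro h; nlinarith [hx.1]

lemma wachter_J (r a : ℝ) (hr : 0 < r) (hra : r ≤ a) :
    ∫ t in (-r)..r, Real.sqrt (r^2 - t^2) / (t + a)
      = π * (a - Real.sqrt (a^2 - r^2)) := by
  rcases eq_or_lt_of_le hra with rfl | hlt
  · -- a = r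
    set F : ℝ → ℝ := fun t => Real.sqrt (r^2 - t^2) + r * Real.arcsin (t / r) with hF
    have cont : ContinuousOn F (Set.Icc (-r) r) := by
      apply Continuous.continuousOn
      exact ((continuous_const.sub (continuous_pow 2)).sqrt).add
        (continuous_const.mul (Real.continuous_arcsin.comp (continuous_id.div_const r)))
    have deriv : ∀ x ∈ Set.Ioo (-r) r,
        HasDerivWithinAt F (Real.sqrt (r^2 - x^2) / (x + r)) (Set.Ioi x) x := by
      intro x hx
      obtain ⟨hx1, hx2⟩ := hx
      have hS : 0 < r^2 - x^2 := by nlinarith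
      have hSpos : 0 < Real.sqrt (r^2 - x^2) := Real.sqrt_pos.mpr hS
      have hS2 : Real.sqrt (r^2 - x^2) ^ 2 = r^2 - x^2 := Real.sq_sqrt hS.le
      have h1 : HasDerivAt (fun t : ℝ => Real.sqrt (r^2 - t^2))
          (-x / Real.sqrt (r^2 - x^2)) x := by
        have := (Real.hasDerivAt_sqrt hS.ne').comp x ((hasDerivAt_pow 2 x).const_sub (r^2))
        convert this using 1
        case e'_4 => rfl
        case e'_5 => rfl
        case e'_8 => rfl
        field_simp
        ring
      have hne1 : x / r ≠ -1 := by
        have : -1 < x / r := by rw [lt_div_iff₀ hr]; linarith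
        exact this.ne'
      have hne2 : x / r ≠ 1 := by
        have : x / r < 1 := by rw [div_lt_one hr]; linarith
        exact this.ne
      have hsq : Real.sqrt (1 - (x/r)^2) = Real.sqrt (r^2 - x^2) / r := by
        rw [show 1 - (x/r)^2 = (r^2 - x^2)/r^2 by field_simp,
          Real.sqrt_div hS.le, Real.sqrt_sq hr.le]
      have h2 : HasDerivAt (fun t : ℝ => r * Real.arcsin (t / r))
          (r * (1 / Real.sqrt (1 - (x/r)^2) * (1/r))) x := by
        exact (((Real.hasDerivAt_arcsin hne1 hne2).comp x
          ((hasDerivAt_id x).div_const r))).const_mul r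
      have := h1.add h2
      convert this.hasDerivWithinAt using 1
      case e'_4 => rfl
      case e'_5 => rfl
      case e'_8 => rfl
      rw [hsq]
      have hSne : Real.sqrt (r^2 - x^2) ≠ 0 := hSpos.ne'
      have hxrne : x + r ≠ 0 := by intro h; nlinarith
      field_simp
      linear_combination hS2
    rw [intervalIntegral.integral_eq_sub_of_hasDeriv_right_of_le (by linarith) cont deriv
      (wachter_integrable_aux r r hr le_rfl)]
    have hrr : r / r = 1 := div_self hr.ne'
    have h0 : r^2 - r^2 = 0 := by ring
    have h0' : r^2 - (-r)^2 = 0 := by ring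
    simp only [hF, h0, h0', Real.sqrt_zero, hrr, zero_add]
    rw [show -r / r = -(r/r) by ring, hrr]
    rw [Real.arcsin_one, Real.arcsin_neg, Real.arcsin_one]
    ring
  · -- r < a
    have hq : 0 < a^2 - r^2 := by nlinarith
    have hQpos : 0 < Real.sqrt (a^2 - r^2) := Real.sqrt_pos.mpr hq
    have hQ2 : Real.sqrt (a^2 - r^2) ^ 2 = a^2 - r^2 := Real.sq_sqrt hq.le
    set Q := Real.sqrt (a^2 - r^2) with hQ
    set F : ℝ → ℝ := fun t => Real.sqrt (r^2 - t^2) + a * Real.arcsin (t / r)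
      - Q * Real.arcsin ((r^2 + a*t) / (r * (t + a))) with hF
    have cont : ContinuousOn F (Set.Icc (-r) r) := by
      apply ContinuousOn.sub
      · apply Continuous.continuousOn
        exact ((continuous_const.sub (continuous_pow 2)).sqrt).add
          (continuous_const.mul (Real.continuous_arcsin.comp (continuous_id.div_const r)))
      · apply ContinuousOn.mul continuousOn_const
        apply Real.continuous_arcsin.comp_continuousOn
        apply ContinuousOn.div
        · exact (continuous_const.add (continuous_const.mul continuous_id)).continuousOn
        · exact (continuous_const.mul (continuous_id.add continuous_const)).continuousOn
        · intro x hx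
          have h1 := hx.1
          have : 0 < r * (x + a) := by
            apply mul_pos hr
            have := hx.1
            simp only [Set.mem_Icc] at hx
            linarith [hx.1]
          exact this.ne'
    have deriv : ∀ x ∈ Set.Ioo (-r) r,
        HasDerivWithinAt F (Real.sqrt (r^2 - x^2) / (x + a)) (Set.Ioi x) x := by
      intro x hx
      obtain ⟨hx1, hx2⟩ := hx
      have hxa : 0 < x + a := by linarith
      have hden : 0 < r * (x + a) := mul_pos hr hxa
      have hS : 0 < r^2 - x^2 := by nlinarith
      have hSpos : 0 < Real.sqrt (r^2 - x^2) := Real.sqrt_pos.mpr hS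
      have hS2 : Real.sqrt (r^2 - x^2) ^ 2 = r^2 - x^2 := Real.sq_sqrt hS.le
      have h1 : HasDerivAt (fun t : ℝ => Real.sqrt (r^2 - t^2))
          (-x / Real.sqrt (r^2 - x^2)) x := by
        have := (Real.hasDerivAt_sqrt hS.ne').comp x ((hasDerivAt_pow 2 x).const_sub (r^2))
        convert this using 1
        case e'_4 => rfl
        case e'_5 => rfl
        case e'_8 => rfl
        field_simp
        ring
      have hne1 : x / r ≠ -1 := by
        have : -1 < x / r := by rw [lt_div_iff₀ hr]; linarith
        exact this.ne'
      have hne2 : x / r ≠ 1 := by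
        have : x / r < 1 := by rw [div_lt_one hr]; linarith
        exact this.ne
      have hsq : Real.sqrt (1 - (x/r)^2) = Real.sqrt (r^2 - x^2) / r := by
        rw [show 1 - (x/r)^2 = (r^2 - x^2)/r^2 by field_simp,
          Real.sqrt_div hS.le, Real.sqrt_sq hr.le]
      have h2 : HasDerivAt (fun t : ℝ => a * Real.arcsin (t / r))
          (a * (1 / Real.sqrt (1 - (x/r)^2) * (1/r))) x :=
        by exact (((Real.hasDerivAt_arcsin hne1 hne2).comp x
          ((hasDerivAt_id x).div_const r))).const_mul a
      -- the third term
      have hg1 : (r^2 + a*x) / (r * (x + a)) < 1 := by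
        rw [div_lt_one hden]; nlinarith
      have hg2 : -1 < (r^2 + a*x) / (r * (x + a)) := by
        rw [lt_div_iff₀ hden]; nlinarith
      have h3 : HasDerivAt (fun t : ℝ => (r^2 + a*t) / (r * (t + a)))
          ((a^2 - r^2) / (r * (x + a)^2)) x := by
        have hnum : HasDerivAt (fun t : ℝ => r^2 + a*t) a x := by
          simpa using ((hasDerivAt_id x).const_mul a).const_add (r^2)
        have hden' : HasDerivAt (fun t : ℝ => r * (t + a)) r x := by
          simpa using ((hasDerivAt_id x).add_const a).const_mul r
        have := hnum.div hden' hden.ne'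
        convert this using 1
        case e'_4 => rfl
        case e'_5 => rfl
        case e'_8 => rfl
        field_simp
        ring
      have hgsq : Real.sqrt (1 - ((r^2 + a*x) / (r * (x + a)))^2)
          = Q * Real.sqrt (r^2 - x^2) / (r * (x + a)) := by
        rw [show 1 - ((r^2 + a*x) / (r * (x + a)))^2
            = ((a^2 - r^2) * (r^2 - x^2)) / (r * (x + a))^2 by field_simp; ring,
          Real.sqrt_div (by positivity), Real.sqrt_mul hq.le, Real.sqrt_sq hden.le, hQ]
      have h4 : HasDerivAt (fun t : ℝ => Q * Real.arcsin ((r^2 + a*t) / (r * (t + a))))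
          (Q * (1 / Real.sqrt (1 - ((r^2 + a*x) / (r * (x + a)))^2)
            * ((a^2 - r^2) / (r * (x + a)^2)))) x :=
        by exact ((Real.hasDerivAt_arcsin hg2.ne' hg1.ne).comp x h3).const_mul Q
      have := (h1.add h2).sub h4
      convert this.hasDerivWithinAt using 1
      case e'_4 => rfl
      case e'_5 => rfl
      case e'_8 => rfl
      rw [hsq, hgsq]
      have hSne : Real.sqrt (r^2 - x^2) ≠ 0 := hSpos.ne'
      have hQne : Q ≠ 0 := hQpos.ne'
      have hxane : x + a ≠ 0 := hxa.ne'
      field_simp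
      linear_combination hS2
    rw [intervalIntegral.integral_eq_sub_of_hasDeriv_right_of_le (by linarith) cont deriv
      (wachter_integrable_aux r a hr hra)]
    have hrr : r / r = 1 := div_self hr.ne'
    have h0 : r^2 - r^2 = 0 := by ring
    have h0' : r^2 - (-r)^2 = 0 := by ring
    have hgr : (r^2 + a*r) / (r * (r + a)) = 1 := by
      rw [show r^2 + a*r = r * (r + a) by ring]
      exact div_self (mul_pos hr (by linarith : (0:ℝ) < r + a)).ne'
    have hgr' : (r^2 + a*(-r)) / (r * (-r + a)) = -1 := by
      rw [div_eq_iff (mul_pos hr (by linarith : (0:ℝ) < -r + a)).ne']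
      ring
    simp only [hF, h0, h0', Real.sqrt_zero, zero_add, hrr, hgr, hgr']
    rw [show -r / r = -(r/r) by ring, hrr]
    rw [Real.arcsin_one, Real.arcsin_neg, Real.arcsin_one]
    ring

lemma wachter_integrable' (r a mm : ℝ) (hr : 0 < r) (hra : r ≤ a) :
    IntervalIntegrable (fun x => Real.sqrt (r^2 - (x - mm)^2) / (x - mm + a))
      volume (mm - r) (mm + r) := by
  have h := (wachter_integrable_aux r a hr hra).comp_sub_right mm
  rw [show -r + mm = mm - r by ring, show r + mm = mm + r by ring] at h
  exact h

lemma wachter_J' (r a mm : ℝ) (hr : 0 < r) (hra : r ≤ a) :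
    ∫ x in (mm - r)..(mm + r), Real.sqrt (r^2 - (x - mm)^2) / (x - mm + a)
      = π * (a - Real.sqrt (a^2 - r^2)) := by
  have h := intervalIntegral.integral_comp_sub_right
    (a := mm - r) (b := mm + r) (fun t => Real.sqrt (r^2 - t^2) / (t + a)) mm
  rw [show mm - r - mm = -r by ring, show mm + r - mm = r by ring] at h
  rw [← wachter_J r a hr hra, ← h]

theorem wachter_density_integrates_to_one (y c : ℝ) (hy : 0 < y) (hy1 : y < 1)
    (hc : 0 < c) (hc1 : c ≤ 1) :
    ∫ x in (((1 - Real.sqrt (c + y - c*y)) / (1 - y))^2)..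
          (((1 + Real.sqrt (c + y - c*y)) / (1 - y))^2),
      (1 - y) * Real.sqrt ((((1 + Real.sqrt (c + y - c*y)) / (1 - y))^2 - x)
          * (x - ((1 - Real.sqrt (c + y - c*y)) / (1 - y))^2))
        / (2 * π * x * (c + x*y)) = 1 := by
  have hy1' : (0:ℝ) < 1 - y := by linarith
  have harg : 0 < c + y - c*y := by nlinarith
  set s := Real.sqrt (c + y - c*y) with hs
  have hs0 : 0 < s := Real.sqrt_pos.mpr harg
  have hssq : s^2 = c + y - c*y := Real.sq_sqrt harg.le
  have hs1 : s ≤ 1 := by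
    rw [hs, show (1:ℝ) = Real.sqrt 1 by simp]
    exact Real.sqrt_le_sqrt (by nlinarith)
  have hys : y < s := by nlinarith [hssq, sq_nonneg (s - y), mul_pos hc hy1', hs0]
  set b1 := ((1 - s) / (1 - y))^2 with hb1def
  set bb := ((1 + s) / (1 - y))^2 with hbbdef
  set r := 2*s/(1-y)^2 with hrdef
  set m := (1 + s^2)/(1-y)^2 with hmdef
  have hb1 : b1 = m - r := by rw [hb1def, hmdef, hrdef]; field_simp; ring
  have hbb : bb = m + r := by rw [hbbdef, hmdef, hrdef]; field_simp; ring
  have hr0 : 0 < r := by rw [hrdef]; positivity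
  have hrm : r ≤ m := by
    have h : m - r = ((1-s)/(1-y))^2 := by rw [hmdef, hrdef]; field_simp; ring
    nlinarith [sq_nonneg ((1-s)/(1-y))]
  have hb1nn : (0:ℝ) ≤ b1 := sq_nonneg _
  have hble : b1 ≤ bb := by
    have : 0 ≤ r := hr0.le
    linarith [hb1, hbb]
  have hd : 0 < c/y := by positivity
  have hrm2 : r ≤ m + c/y := by linarith
  set K := (1-y)/(2*π*c) with hK
  have heq : Set.EqOn
      (fun x => (1 - y) * Real.sqrt ((bb - x) * (x - b1)) / (2 * π * x * (c + x*y)))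
      (fun x => K * (Real.sqrt (r^2 - (x - m)^2) / (x - m + m))
        - K * (Real.sqrt (r^2 - (x - m)^2) / (x - m + (m + c/y))))
      (Set.uIcc b1 bb) := by
    intro x hx
    rw [Set.uIcc_of_le hble] at hx
    obtain ⟨hx1, hx2⟩ := hx
    have hsqarg : (bb - x) * (x - b1) = r^2 - (x - m)^2 := by
      rw [hb1, hbb]; ring
    simp only
    rcases eq_or_lt_of_le (hb1nn.trans hx1) with h0 | hx0
    · -- x = 0, forces b1 = 0 and m = r
      have hb10 : b1 = 0 := le_antisymm (h0 ▸ hx1) hb1nn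
      have hmr : m = r := by rw [hb1] at hb10; linarith
      rw [← h0]
      have e1 : r^2 - (0 - m)^2 = 0 := by rw [hmr]; ring
      have e2 : (bb - 0) * (0 - b1) = 0 := by rw [hb10]; ring
      rw [e1, e2, Real.sqrt_zero]
      simp
    · have hcy : 0 < c + x*y := by positivity
      have hxd : 0 < x + c/y := by positivity
      rw [hsqarg]
      have h1 : x - m + m = x := by ring
      have h2 : x - m + (m + c/y) = x + c/y := by ring
      rw [h1, h2, hK]
      have hπ : π ≠ 0 := Real.pi_ne_zero
      field_simp
      ring
  rw [intervalIntegral.integral_congr heq, hb1, hbb]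
  rw [intervalIntegral.integral_sub
    ((wachter_integrable' r m m hr0 hrm).const_mul K)
    ((wachter_integrable' r (m + c/y) m hr0 hrm2).const_mul K)]
  rw [intervalIntegral.integral_const_mul, intervalIntegral.integral_const_mul]
  rw [wachter_J' r m m hr0 hrm, wachter_J' r (m + c/y) m hr0 hrm2]
  have hcc : c = (s^2 - y)/(1 - y) := by
    field_simp
    linear_combination -hssq
  have hA : Real.sqrt (m^2 - r^2) = (1-c)/(1-y) := by
    have key : m^2 - r^2 = ((1-c)/(1-y))^2 := by
      rw [hmdef, hrdef, hcc]
      field_simp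
      ring
    rw [key, Real.sqrt_sq (div_nonneg (by linarith) (by linarith))]
  have hB : Real.sqrt ((m + c/y)^2 - r^2) = (c+y)/(y*(1-y)) := by
    have key : (m + c/y)^2 - r^2 = ((c+y)/(y*(1-y)))^2 := by
      rw [hmdef, hrdef, hcc]
      field_simp
      ring
    rw [key, Real.sqrt_sq (by positivity)]
  rw [hA, hB, hK]
  have hπ : π ≠ 0 := Real.pi_ne_zero
  field_simp
  ring
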